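/- For every real k with 17/13 ≤ k < 11/7 (i.e., p₇/p₆ ≤ k < p₅/p₄), the first k-Ramanujan prime satisfies R₁⁽ᵏ⁾ = 11. -/

import Mathlib

open Real

/-- The prime counting function `π` extended to the reals:
`primePi x` is the number of primes `p ≤ x`. -/
noncomputable def primePi (x : ℝ) : ℕ := Nat.primeCounting ⌊x⌋₊

/-- The first `k`-Ramanujan prime `R₁⁽ᵏ⁾`: the least positive integer `m` such that
`π(x) - π(x/k) ≥ 1` for every real `x ≥ m`. -/
noncomputable def firstRamanujanPrime (k : ℝ) : ℕ :=
  sInf {m : ℕ | 0 < m ∧ ∀ x : ℝ, (m : ℝ) ≤ x → primePi (x / k) < primePi x}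

/-- The `n`-th prime number, with `nthPrime 1 = 2`, `nthPrime 2 = 3`, … -/
noncomputable def nthPrime (n : ℕ) : ℕ := Nat.nth Nat.Prime (n - 1)

set_option maxHeartbeats 2000000

open Finset ArithmeticFunction

namespace Nag

noncomputable def psi (n : ℕ) : ℝ := ∑ d ∈ Finset.Icc 1 n, Λ d
noncomputable def theta (n : ℕ) : ℝ := ∑ p ∈ (Finset.Icc 1 n).filter Nat.Prime, Real.log p
noncomputable def T (n : ℕ) : ℝ := Real.log (Nat.factorial n : ℝ)
noncomputable def S (n : ℕ) : ℝ := T n - T (n/2) - T (n/3) - T (n/5) + T (n/30)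
noncomputable def L (x : ℝ) : ℝ := x * Real.log x - x
noncomputable def Ac : ℝ :=
  Real.log 2 / 2 + Real.log 3 / 3 + Real.log 5 / 5 - Real.log 30 / 30



/-- The Chebyshev 30-pattern indicator. -/
def F (N : ℕ) : ℤ := (N : ℤ) - (N / 2 : ℕ) - (N / 3 : ℕ) - (N / 5 : ℕ) + (N / 30 : ℕ)

lemma F_period (N : ℕ) : F (N + 30) = F N := by
  unfold F
  have h2 : (N + 30) / 2 = N / 2 + 15 := by omega
  have h3 : (N + 30) / 3 = N / 3 + 10 := by omega
  have h5 : (N + 30) / 5 = N / 5 + 6 := by omega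
  have h30 : (N + 30) / 30 = N / 30 + 1 := by omega
  rw [h2, h3, h5, h30]
  push_cast
  ring

lemma F_range (N : ℕ) : 0 ≤ F N ∧ F N ≤ 1 := by
  induction N using Nat.strong_induction_on with
  | _ N ih =>
    by_cases h : N < 30
    · interval_cases N <;> decide
    · obtain ⟨M, rfl⟩ : ∃ M, N = M + 30 := ⟨N - 30, by omega⟩
      rw [F_period]
      exact ih M (by omega)

lemma F_one {N : ℕ} (h1 : 1 ≤ N) (h5 : N ≤ 5) : F N = 1 := by
  interval_cases N <;> decide


lemma T_eq_sum_log (n : ℕ) : T n = ∑ m ∈ Finset.Icc 1 n, Real.log m := by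
  rw [T, ← Finset.prod_Ico_id_eq_factorial]
  rw [show Finset.Icc 1 n = Finset.Ico 1 (n+1) by rfl]
  push_cast
  rw [Real.log_prod]
  intro x hx
  simp only [Finset.mem_Ico] at hx
  have : (0:ℕ) < x := hx.1
  exact_mod_cast this.ne'
  

lemma T_eq_sum_vonMangoldt (n : ℕ) :
    T n = ∑ d ∈ Finset.Icc 1 n, (n / d : ℕ) * Λ d := by
  rw [T_eq_sum_log]
  have h1 : ∀ m ∈ Finset.Icc 1 n, Real.log m = ∑ d ∈ m.divisors, Λ d := by
    intro m hm
    rw [ArithmeticFunction.vonMangoldt_sum]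
  rw [Finset.sum_congr rfl h1]
  have hswap :
      (∑ m ∈ Finset.Icc 1 n, ∑ d ∈ m.divisors, Λ d)
        = ∑ d ∈ Finset.Icc 1 n, ∑ m ∈ (Finset.Icc 1 n).filter (d ∣ ·), Λ d := by
    apply Finset.sum_comm'
    intro m d
    simp only [Nat.mem_divisors, Finset.mem_Icc, Finset.mem_filter]
    constructor
    · rintro ⟨⟨h1m, h2m⟩, hdm, hm0⟩
      have hd1 : 1 ≤ d := Nat.pos_of_dvd_of_pos hdm (by omega)
      have hdn : d ≤ n := le_trans (Nat.le_of_dvd (by omega) hdm) h2m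
      exact ⟨⟨⟨h1m, h2m⟩, hdm⟩, hd1, hdn⟩
    · rintro ⟨⟨⟨h1m, h2m⟩, hdm⟩, _, _⟩
      exact ⟨⟨h1m, h2m⟩, hdm, by omega⟩
  rw [hswap]
  refine Finset.sum_congr rfl fun d hd => ?_
  rw [Finset.sum_const, nsmul_eq_mul]
  congr 1
  rw [show Finset.Icc 1 n = Finset.Ioc 0 n by rfl]
  exact_mod_cast congrArg (Nat.cast : ℕ → ℝ) (Nat.Ioc_filter_dvd_card_eq_div n d)


lemma T_div_eq_sum (n j : ℕ) (hj : 1 ≤ j) :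
    T (n / j) = ∑ d ∈ Finset.Icc 1 n, (n / (j * d) : ℕ) * Λ d := by
  rw [T_eq_sum_vonMangoldt]
  have h1 : ∀ d ∈ Finset.Icc 1 (n / j), ((n / j / d : ℕ) : ℝ) * Λ d
      = ((n / (j * d) : ℕ) : ℝ) * Λ d := by
    intro d _
    rw [Nat.div_div_eq_div_mul]
  rw [Finset.sum_congr rfl h1]
  apply Finset.sum_subset
  · apply Finset.Icc_subset_Icc_right
    exact Nat.div_le_self n j
  · intro d hd hnd
    simp only [Finset.mem_Icc] at hd hnd
    have : n / j < d := by omega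
    have : n / (j * d) = 0 := by
      rw [← Nat.div_div_eq_div_mul]
      exact Nat.div_eq_of_lt this
    rw [this]
    simp

lemma S_eq_sum (n : ℕ) :
    S n = ∑ d ∈ Finset.Icc 1 n, Λ d * ((F (n / d) : ℤ) : ℝ) := by
  rw [S, T_eq_sum_vonMangoldt, T_div_eq_sum n 2 (by norm_num),
    T_div_eq_sum n 3 (by norm_num), T_div_eq_sum n 5 (by norm_num),
    T_div_eq_sum n 30 (by norm_num), ← Finset.sum_sub_distrib, ← Finset.sum_sub_distrib,
    ← Finset.sum_sub_distrib, ← Finset.sum_add_distrib]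
  refine Finset.sum_congr rfl fun d hd => ?_
  have e2 : n / (2 * d) = n / d / 2 := by rw [Nat.div_div_eq_div_mul, Nat.mul_comm]
  have e3 : n / (3 * d) = n / d / 3 := by rw [Nat.div_div_eq_div_mul, Nat.mul_comm]
  have e5 : n / (5 * d) = n / d / 5 := by rw [Nat.div_div_eq_div_mul, Nat.mul_comm]
  have e30 : n / (30 * d) = n / d / 30 := by rw [Nat.div_div_eq_div_mul, Nat.mul_comm]
  have hF : ((F (n / d) : ℤ) : ℝ) = ((n/d : ℕ) : ℝ) - ((n/d/2 : ℕ) : ℝ)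
      - ((n/d/3 : ℕ) : ℝ) - ((n/d/5 : ℕ) : ℝ) + ((n/d/30 : ℕ) : ℝ) := by
    rw [F]; simp only [Int.cast_add, Int.cast_sub, Int.cast_natCast]
  rw [e2, e3, e5, e30, hF]
  ring


lemma psi_nonneg (n : ℕ) : 0 ≤ psi n :=
  Finset.sum_nonneg fun d _ => vonMangoldt_nonneg

lemma psi_mono {m n : ℕ} (h : m ≤ n) : psi m ≤ psi n := by
  apply Finset.sum_le_sum_of_subset_of_nonneg (Finset.Icc_subset_Icc_right h)
  intro i _ _; exact vonMangoldt_nonneg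

lemma S_le_psi (n : ℕ) : S n ≤ psi n := by
  rw [S_eq_sum, psi]
  apply Finset.sum_le_sum
  intro d _
  have h1 : ((F (n / d) : ℤ) : ℝ) ≤ 1 := by exact_mod_cast (F_range (n / d)).2
  calc Λ d * ((F (n / d) : ℤ) : ℝ) ≤ Λ d * 1 := by
        apply mul_le_mul_of_nonneg_left h1 vonMangoldt_nonneg
    _ = Λ d := mul_one _

lemma psi_le_S_add (n : ℕ) : psi n ≤ S n + psi (n / 6) := by
  have key : psi n - S n ≤ psi (n / 6) := by
    rw [S_eq_sum, psi, psi, ← Finset.sum_sub_distrib]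
    have h1 : ∀ d ∈ Finset.Icc 1 n,
        Λ d - Λ d * ((F (n / d) : ℤ) : ℝ) = Λ d * (1 - ((F (n / d) : ℤ) : ℝ)) := by
      intro d _; ring
    rw [Finset.sum_congr rfl h1]
    have h2 : (∑ d ∈ Finset.Icc 1 n, Λ d * (1 - ((F (n / d) : ℤ) : ℝ)))
        = ∑ d ∈ Finset.Icc 1 (n / 6), Λ d * (1 - ((F (n / d) : ℤ) : ℝ)) := by
      symm
      apply Finset.sum_subset (Finset.Icc_subset_Icc_right (Nat.div_le_self n 6))
      intro d hd hnd
      simp only [Finset.mem_Icc] at hd hnd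
      have hd0 : 0 < d := hd.1
      have hdgt : n / 6 < d := by omega
      have hle5 : n / d ≤ 5 := by
        have : n / d < 6 := by
          rw [Nat.div_lt_iff_lt_mul hd0]
          omega
        omega
      have hge1 : 1 ≤ n / d := by
        rw [Nat.le_div_iff_mul_le hd0]
        omega
      rw [F_one hge1 hle5]
      simp
    rw [h2]
    apply Finset.sum_le_sum
    intro d _
    have h3 : 1 - ((F (n / d) : ℤ) : ℝ) ≤ 1 := by
      have := (F_range (n / d)).1
      have : (0:ℝ) ≤ ((F (n / d) : ℤ) : ℝ) := by exact_mod_cast this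
      linarith
    calc Λ d * (1 - ((F (n / d) : ℤ) : ℝ)) ≤ Λ d * 1 :=
          mul_le_mul_of_nonneg_left h3 vonMangoldt_nonneg
      _ = Λ d := mul_one _
  linarith

lemma one_sub_inv_le_log {x : ℝ} (hx : 0 < x) : 1 - 1/x ≤ Real.log x := by
  have h := Real.log_le_sub_one_of_pos (show (0:ℝ) < x⁻¹ by positivity)
  rw [Real.log_inv] at h
  have : x⁻¹ = 1/x := by ring
  linarith [h]

lemma T_succ (n : ℕ) : T (n + 1) = T n + Real.log (n + 1) := by
  rw [T, T, Nat.factorial_succ]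
  push_cast
  rw [Real.log_mul (by positivity) (by positivity : (0:ℝ) < (Nat.factorial n : ℝ)).ne']
  ring

lemma T_lower : ∀ n : ℕ, 1 ≤ n → L n + 1 ≤ T n := by
  intro n
  induction n with
  | zero => omega
  | succ m ih =>
    intro _
    by_cases hm : 1 ≤ m
    · have hT := ih hm
      rw [T_succ]
      have hm1 : (1:ℝ) ≤ (m:ℝ) := by exact_mod_cast hm
      have hmpos : (0:ℝ) < m := by linarith
      have hkey : L ((m:ℝ) + 1) ≤ L m + Real.log ((m:ℝ) + 1) := by
        have hlog : Real.log (((m:ℝ)+1)/m) ≤ ((m:ℝ)+1)/m - 1 :=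
          Real.log_le_sub_one_of_pos (by positivity)
        have hd : ((m:ℝ)+1)/m - 1 = 1/m := by field_simp; ring
        have hsplit : Real.log (((m:ℝ)+1)/m) = Real.log ((m:ℝ)+1) - Real.log m :=
          Real.log_div (by positivity) (by positivity)
        rw [L, L]
        have : (m:ℝ) * (Real.log ((m:ℝ)+1) - Real.log m) ≤ 1 := by
          rw [← hsplit]
          calc (m:ℝ) * Real.log (((m:ℝ)+1)/m) ≤ (m:ℝ) * (1/m) := by
                apply mul_le_mul_of_nonneg_left _ (le_of_lt hmpos)
                linarith
            _ = 1 := by field_simp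
        nlinarith [this]
      push_cast
      linarith
    · have hm0 : m = 0 := by omega
      subst hm0
      simp [T, L]

lemma T_upper : ∀ n : ℕ, 1 ≤ n → T n ≤ L n + Real.log n + 1 := by
  intro n
  induction n with
  | zero => omega
  | succ m ih =>
    intro _
    by_cases hm : 1 ≤ m
    · have hT := ih hm
      rw [T_succ]
      have hm1 : (1:ℝ) ≤ (m:ℝ) := by exact_mod_cast hm
      have hmpos : (0:ℝ) < m := by linarith
      have hkey : L (m:ℝ) + Real.log m ≤ L ((m:ℝ) + 1) := by
        have hlog : 1 - 1/(((m:ℝ)+1)/m) ≤ Real.log (((m:ℝ)+1)/m) :=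
          one_sub_inv_le_log (by positivity)
        have hd : 1 - 1/(((m:ℝ)+1)/m) = 1/((m:ℝ)+1) := by
          field_simp; ring
        have hsplit : Real.log (((m:ℝ)+1)/m) = Real.log ((m:ℝ)+1) - Real.log m :=
          Real.log_div (by positivity) (by positivity)
        rw [hd, hsplit] at hlog
        have h2 := mul_le_mul_of_nonneg_left hlog (show (0:ℝ) ≤ (m:ℝ)+1 by positivity)
        have e : ((m:ℝ)+1) * (1/((m:ℝ)+1)) = 1 := by field_simp
        rw [L, L]
        nlinarith [h2, e]
      push_cast
      linarith
    · have hm0 : m = 0 := by omega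
      subst hm0
      simp [T, L]

lemma Lgap_upper {x y : ℝ} (hy : 1 ≤ y) (hxy : y ≤ x) : L x - L y ≤ (x - y) * Real.log x := by
  have hy0 : (0:ℝ) < y := by linarith
  have hx0 : (0:ℝ) < x := by linarith
  have hlog : Real.log (x/y) ≤ x/y - 1 := Real.log_le_sub_one_of_pos (by positivity)
  have hsplit : Real.log (x/y) = Real.log x - Real.log y := Real.log_div hx0.ne' hy0.ne'
  rw [hsplit] at hlog
  have h2 : y * (Real.log x - Real.log y) ≤ x - y := by
    calc y * (Real.log x - Real.log y) ≤ y * (x/y - 1) :=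
          mul_le_mul_of_nonneg_left hlog (le_of_lt hy0)
      _ = x - y := by field_simp
  rw [L, L]
  nlinarith [h2]

lemma Lgap_lower {x y : ℝ} (hy : 1 ≤ y) (hxy : y ≤ x) : (x - y) * Real.log y ≤ L x - L y := by
  have hy0 : (0:ℝ) < y := by linarith
  have hx0 : (0:ℝ) < x := by linarith
  have hlog : 1 - 1/(x/y) ≤ Real.log (x/y) := one_sub_inv_le_log (by positivity)
  have hd : 1 - 1/(x/y) = (x - y)/x := by field_simp
  have hsplit : Real.log (x/y) = Real.log x - Real.log y := Real.log_div hx0.ne' hy0.ne'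
  rw [hd, hsplit] at hlog
  have h2 : x - y ≤ x * (Real.log x - Real.log y) := by
    calc x - y = x * ((x - y)/x) := by field_simp
      _ ≤ x * (Real.log x - Real.log y) := mul_le_mul_of_nonneg_left hlog (le_of_lt hx0)
  rw [L, L]
  nlinarith [h2]

lemma L_mono {x y : ℝ} (hy : 1 ≤ y) (hxy : y ≤ x) : L y ≤ L x := by
  have := Lgap_lower hy hxy
  have hly : 0 ≤ Real.log y := Real.log_nonneg hy
  nlinarith [this]


lemma L_comb {x : ℝ} (hx : 0 < x) :
    L x - L (x/2) - L (x/3) - L (x/5) + L (x/30) = Ac * x := by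
  unfold L Ac
  rw [Real.log_div hx.ne' (by norm_num), Real.log_div hx.ne' (by norm_num),
    Real.log_div hx.ne' (by norm_num), Real.log_div hx.ne' (by norm_num)]
  ring

lemma one_le_log_30 : 1 ≤ Real.log 30 := by
  rw [Real.le_log_iff_exp_le (by norm_num)]
  calc Real.exp 1 ≤ 2.7182818286 := (Real.exp_one_lt_d9).le
    _ ≤ 30 := by norm_num

lemma cast_div_ge_one {n j : ℕ} (hn : 30 ≤ n) (hj : 1 ≤ j) (hjn : j ≤ 30) : (1:ℝ) ≤ ((n / j : ℕ) : ℝ) := by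
  have : 1 ≤ n / j := by
    rw [Nat.le_div_iff_mul_le (by omega)]
    omega
  exact_mod_cast this

lemma cast_div_le {n j : ℕ} (hj : 0 < j) : ((n / j : ℕ) : ℝ) ≤ (n:ℝ) / (j:ℝ) :=
  Nat.cast_div_le

lemma log_ndiv_le {n j : ℕ} (hn : 30 ≤ n) (hj : 1 ≤ j) (hjn : j ≤ 30) :
    Real.log ((n / j : ℕ) : ℝ) ≤ Real.log n := by
  apply Real.log_le_log (by have := cast_div_ge_one hn hj hjn; linarith)
  exact_mod_cast Nat.div_le_self n j

section
variable {n : ℕ} (hn : 30 ≤ n)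

include hn in
lemma S_lower : Ac * n - 4 * Real.log n - 1 ≤ S n := by
  have hn1 : (1:ℝ) ≤ (n:ℝ) := by exact_mod_cast (by omega : 1 ≤ n)
  have hnpos : (0:ℝ) < n := by linarith
  have hlogn : 0 ≤ Real.log n := Real.log_nonneg hn1
  -- T n lower
  have h1 : L n + 1 ≤ T n := T_lower n (by omega)
  -- upper bounds for subtracted terms
  have key : ∀ j : ℕ, 2 ≤ j → j ≤ 5 →
      T (n / j) ≤ L ((n:ℝ)/(j:ℝ)) + Real.log n + 1 := by
    intro j hj2 hj5
    have hge1 := cast_div_ge_one hn (by omega : 1 ≤ j) (by omega : j ≤ 30)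
    have hle := cast_div_le (n := n) (by omega : 0 < j)
    calc T (n / j) ≤ L ((n / j : ℕ)) + Real.log ((n / j : ℕ)) + 1 := by
          apply T_upper
          have : (1:ℝ) ≤ ((n / j : ℕ) : ℝ) := hge1
          exact_mod_cast this
      _ ≤ L ((n:ℝ)/(j:ℝ)) + Real.log n + 1 := by
          have hm := L_mono hge1 hle
          have hl := log_ndiv_le hn (by omega : 1 ≤ j) (by omega : j ≤ 30)
          linarith
  have h2 := key 2 (by norm_num) (by norm_num)
  have h3 := key 3 (by norm_num) (by norm_num)
  have h5 := key 5 (by norm_num) (by norm_num)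
  -- lower bound for T (n/30)
  have hge30 := cast_div_ge_one hn (by norm_num : 1 ≤ 30) (by norm_num : (30:ℕ) ≤ 30)
  have hle30 := cast_div_le (n := n) (by norm_num : 0 < 30)
  have hgap : L ((n:ℝ)/30) - L ((n / 30 : ℕ)) ≤ Real.log n := by
    have hdiff : (n:ℝ)/30 - ((n / 30 : ℕ) : ℝ) ≤ 1 := by
      have : (n:ℝ)/30 < ((n / 30 : ℕ) : ℝ) + 1 := by
        rw [div_lt_iff₀ (by norm_num)]
        have : n < (n / 30 + 1) * 30 := by omega
        exact_mod_cast this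
      linarith
    have hlogx : Real.log ((n:ℝ)/30) ≤ Real.log n := by
      apply Real.log_le_log (by linarith)
      have : (n:ℝ)/30 ≤ (n:ℝ)/1 := by
        apply div_le_div_of_nonneg_left (by linarith) (by norm_num) (by norm_num)
      simpa using this
    have hlogx0 : 0 ≤ Real.log ((n:ℝ)/30) := by
      apply Real.log_nonneg; linarith
    calc L ((n:ℝ)/30) - L ((n / 30 : ℕ)) ≤ ((n:ℝ)/30 - ((n / 30 : ℕ) : ℝ)) * Real.log ((n:ℝ)/30) :=
          Lgap_upper hge30 hle30
      _ ≤ 1 * Real.log ((n:ℝ)/30) := by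
          apply mul_le_mul_of_nonneg_right hdiff hlogx0
      _ ≤ Real.log n := by linarith
  have h30 : L ((n:ℝ)/30) - Real.log n + 1 ≤ T (n / 30) := by
    have := T_lower (n / 30) (by omega)
    linarith
  have hcomb := L_comb hnpos
  have h30' : 1 ≤ Real.log 30 := one_le_log_30
  push_cast at h2 h3 h5
  rw [S]
  nlinarith [h1, h2, h3, h5, h30, hcomb]

include hn in
lemma S_upper : S n ≤ Ac * n + 5 * Real.log n := by
  have hn1 : (1:ℝ) ≤ (n:ℝ) := by exact_mod_cast (by omega : 1 ≤ n)
  have hnpos : (0:ℝ) < n := by linarith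
  have hlogn : 0 ≤ Real.log n := Real.log_nonneg hn1
  have h1 : T n ≤ L n + Real.log n + 1 := T_upper n (by omega)
  have key : ∀ j : ℕ, 2 ≤ j → j ≤ 5 →
      L ((n:ℝ)/(j:ℝ)) - Real.log n + 1 ≤ T (n / j) := by
    intro j hj2 hj5
    have hge1 := cast_div_ge_one hn (by omega : 1 ≤ j) (by omega : j ≤ 30)
    have hle := cast_div_le (n := n) (by omega : 0 < j)
    have hjr : (0:ℝ) < (j:ℝ) := by exact_mod_cast (by omega : 0 < j)
    have hgap : L ((n:ℝ)/(j:ℝ)) - L ((n / j : ℕ)) ≤ Real.log n := by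
      have hdiff : (n:ℝ)/(j:ℝ) - ((n / j : ℕ) : ℝ) ≤ 1 := by
        have : (n:ℝ)/(j:ℝ) < ((n / j : ℕ) : ℝ) + 1 := by
          rw [div_lt_iff₀ hjr]
          have : n < (n / j + 1) * j := by
            exact (Nat.div_lt_iff_lt_mul (by omega : 0 < j)).mp (Nat.lt_succ_self _)
          exact_mod_cast this
        linarith
      have hlogx : Real.log ((n:ℝ)/(j:ℝ)) ≤ Real.log n := by
        apply Real.log_le_log (by linarith [cast_div_ge_one (n:=n) hn (by omega : 1 ≤ j) (by omega : j ≤ 30), cast_div_le (n:=n) (by omega : 0 < j)])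
        calc (n:ℝ)/(j:ℝ) ≤ (n:ℝ)/1 := by
              apply div_le_div_of_nonneg_left (by linarith) (by norm_num)
              exact_mod_cast (by omega : (1:ℕ) ≤ j)
          _ = n := by ring
      have hlogx0 : 0 ≤ Real.log ((n:ℝ)/(j:ℝ)) := by
        apply Real.log_nonneg
        linarith [cast_div_ge_one (n:=n) hn (by omega : 1 ≤ j) (by omega : j ≤ 30), cast_div_le (n:=n) (by omega : 0 < j)]
      calc L ((n:ℝ)/(j:ℝ)) - L ((n / j : ℕ)) ≤ ((n:ℝ)/(j:ℝ) - ((n / j : ℕ) : ℝ)) * Real.log ((n:ℝ)/(j:ℝ)) :=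
            Lgap_upper hge1 hle
        _ ≤ 1 * Real.log ((n:ℝ)/(j:ℝ)) := mul_le_mul_of_nonneg_right hdiff hlogx0
        _ ≤ Real.log n := by linarith
    have hT := T_lower (n / j) (by
      have : 1 ≤ n / j := by rw [Nat.le_div_iff_mul_le (by omega)]; omega
      exact this)
    linarith
  have h2 := key 2 (by norm_num) (by norm_num)
  have h3 := key 3 (by norm_num) (by norm_num)
  have h5 := key 5 (by norm_num) (by norm_num)
  have h30 : T (n / 30) ≤ L ((n:ℝ)/30) + Real.log n + 1 := by
    have hge30 := cast_div_ge_one hn (by norm_num : 1 ≤ 30) (by norm_num : (30:ℕ) ≤ 30)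
    have hle30 := cast_div_le (n := n) (by norm_num : 0 < 30)
    have hm := L_mono hge30 hle30
    have hl := log_ndiv_le hn (by norm_num : 1 ≤ 30) (by norm_num : (30:ℕ) ≤ 30)
    have := T_upper (n / 30) (by omega)
    linarith
  have hcomb := L_comb hnpos
  push_cast at h2 h3 h5
  rw [S]
  nlinarith [h1, h2, h3, h5, h30, hcomb]

end

lemma log3_lb : (1.095:ℝ) ≤ Real.log 3 := by
  have h9 : Real.log 9 = 2 * Real.log 3 := by
    rw [show (9:ℝ) = 3^2 by norm_num, Real.log_pow]; push_cast; ring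
  have h8 : Real.log 8 = 3 * Real.log 2 := by
    rw [show (8:ℝ) = 2^3 by norm_num, Real.log_pow]; push_cast; ring
  have hm : Real.log 9 = Real.log 8 + Real.log (9/8) := by
    rw [← Real.log_mul (by norm_num) (by norm_num)]; norm_num
  have hq : (1:ℝ)/9 ≤ Real.log (9/8) := by
    have := one_sub_inv_le_log (show (0:ℝ) < 9/8 by norm_num)
    norm_num at this ⊢
    linarith
  have h2 := Real.log_two_gt_d9
  nlinarith

lemma log3_ub : Real.log 3 ≤ 1.103 := by
  have h9 : Real.log 9 = 2 * Real.log 3 := by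
    rw [show (9:ℝ) = 3^2 by norm_num, Real.log_pow]; push_cast; ring
  have h8 : Real.log 8 = 3 * Real.log 2 := by
    rw [show (8:ℝ) = 2^3 by norm_num, Real.log_pow]; push_cast; ring
  have hm : Real.log 9 = Real.log 8 + Real.log (9/8) := by
    rw [← Real.log_mul (by norm_num) (by norm_num)]; norm_num
  have hq : Real.log ((9:ℝ)/8) ≤ 1/8 := by
    have := Real.log_le_sub_one_of_pos (show (0:ℝ) < 9/8 by norm_num)
    linarith
  have h2 := Real.log_two_lt_d9
  nlinarith

lemma log5_lb : (1.586:ℝ) ≤ Real.log 5 := by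
  have h5 : Real.log 5 = 2 * Real.log 2 + Real.log (5/4) := by
    rw [show (5:ℝ) = 4 * (5/4) by norm_num, Real.log_mul (by norm_num) (by norm_num),
      show (4:ℝ) = 2^2 by norm_num, Real.log_pow]
    push_cast; ring
  have hq : (1:ℝ)/5 ≤ Real.log (5/4) := by
    have := one_sub_inv_le_log (show (0:ℝ) < 5/4 by norm_num)
    norm_num at this ⊢
    linarith
  have h2 := Real.log_two_gt_d9
  nlinarith

lemma log5_ub : Real.log 5 ≤ 1.637 := by
  have h5 : Real.log 5 = 2 * Real.log 2 + Real.log (5/4) := by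
    rw [show (5:ℝ) = 4 * (5/4) by norm_num, Real.log_mul (by norm_num) (by norm_num),
      show (4:ℝ) = 2^2 by norm_num, Real.log_pow]
    push_cast; ring
  have hq : Real.log ((5:ℝ)/4) ≤ 1/4 := by
    have := Real.log_le_sub_one_of_pos (show (0:ℝ) < 5/4 by norm_num)
    linarith
  have h2 := Real.log_two_lt_d9
  nlinarith

lemma Ac_eq : Ac = (7/15) * Real.log 2 + (3/10) * Real.log 3 + (1/6) * Real.log 5 := by
  have h30 : Real.log 30 = Real.log 2 + Real.log 3 + Real.log 5 := by
    rw [show (30:ℝ) = 2 * 3 * 5 by norm_num,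
      Real.log_mul (by norm_num) (by norm_num), Real.log_mul (by norm_num) (by norm_num)]
  rw [Ac, h30]; ring

lemma Ac_lb : (0.91:ℝ) ≤ Ac := by
  rw [Ac_eq]
  have h2 := Real.log_two_gt_d9
  have h3 := log3_lb
  have h5 := log5_lb
  nlinarith

lemma Ac_ub : Ac ≤ 0.93 := by
  rw [Ac_eq]
  have h2 := Real.log_two_lt_d9
  have h3 := log3_ub
  have h5 := log5_ub
  nlinarith

lemma psi_le_T (n : ℕ) : psi n ≤ (n:ℝ) * Real.log n := by
  rw [psi]
  calc (∑ d ∈ Finset.Icc 1 n, Λ d) ≤ ∑ d ∈ Finset.Icc 1 n, Real.log n := by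
        apply Finset.sum_le_sum
        intro d hd
        simp only [Finset.mem_Icc] at hd
        calc Λ d ≤ Real.log d := vonMangoldt_le_log
          _ ≤ Real.log n := by
              apply Real.log_le_log (by exact_mod_cast hd.1)
              exact_mod_cast hd.2
    _ = (Finset.Icc 1 n).card * Real.log n := by rw [Finset.sum_const, nsmul_eq_mul]
    _ ≤ (n:ℝ) * Real.log n := by
        rcases Nat.eq_zero_or_pos n with h | h
        · subst h; simp
        · have hc : (Finset.Icc 1 n).card = n := by rw [Nat.card_Icc]; omega
          rw [hc]

lemma psi_small {n : ℕ} (hn : n ≤ 29) : psi n ≤ 101 := by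
  have h1 : psi n ≤ psi 29 := psi_mono hn
  have h2 : psi 29 ≤ 29 * Real.log 29 := psi_le_T 29
  have h3 : Real.log 29 ≤ Real.log 32 := by
    apply Real.log_le_log <;> norm_num
  have h4 : Real.log 32 = 5 * Real.log 2 := by
    rw [show (32:ℝ) = 2^5 by norm_num, Real.log_pow]; push_cast; ring
  have h5 := Real.log_two_lt_d9
  push_cast at h2
  nlinarith

lemma psi_upper : ∀ n : ℕ, psi n ≤ (6 * Ac / 5) * n + 4 * (Real.log (n+1))^2 + 101 := by
  intro n
  induction n using Nat.strong_induction_on with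
  | _ n ih =>
    by_cases hn : n ≤ 29
    · have h1 := psi_small hn
      have hAc := Ac_lb
      have hsq : (0:ℝ) ≤ (Real.log (n+1))^2 := sq_nonneg _
      have hn0 : (0:ℝ) ≤ n := Nat.cast_nonneg n
      nlinarith
    · push_neg at hn
      have hn30 : 30 ≤ n := by omega
      have h6lt : n / 6 < n := Nat.div_lt_self (by omega) (by norm_num)
      have ih6 := ih (n / 6) h6lt
      have hstep := psi_le_S_add n
      have hS := S_upper hn30
      -- arithmetic
      have hAc := Ac_lb
      have hcast : ((n/6 : ℕ) : ℝ) ≤ (n:ℝ)/6 := Nat.cast_div_le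
      have hb0 : (0:ℝ) ≤ Real.log ((n/6 : ℕ) + 1) := by
        apply Real.log_nonneg
        have : (0:ℝ) ≤ ((n/6 : ℕ):ℝ) := Nat.cast_nonneg _
        linarith
      have ha0 : Real.log n ≤ Real.log ((n:ℝ)+1) := by
        apply Real.log_le_log (by exact_mod_cast (by omega : 0 < n))
        linarith [show (0:ℝ) ≤ 1 by norm_num]
      have hlogn0 : (0:ℝ) ≤ Real.log n := by
        apply Real.log_nonneg
        exact_mod_cast (by omega : 1 ≤ n)
      have hgap : Real.log ((n/6 : ℕ) + 1) + 5/4 ≤ Real.log ((n:ℝ)+1) := by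
        have hmul : (5:ℝ) * ((n/6 : ℕ) + 1) ≤ (n:ℝ) + 1 := by
          have : 5 * (n/6 : ℕ) + 5 ≤ n + 1 := by omega
          exact_mod_cast this
        have hpos : (0:ℝ) < ((n/6 : ℕ) : ℝ) + 1 := by positivity
        have h51 : Real.log (5 * (((n/6 : ℕ) : ℝ) + 1)) = Real.log 5 + Real.log ((n/6 : ℕ) + 1) := by
          rw [Real.log_mul (by norm_num) hpos.ne']
        have h52 : Real.log (5 * (((n/6 : ℕ) : ℝ) + 1)) ≤ Real.log ((n:ℝ)+1) := by
          apply Real.log_le_log (by positivity)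
          exact_mod_cast hmul
        have h53 := log5_lb
        linarith
      set a := Real.log ((n:ℝ)+1) with ha
      set b := Real.log (((n/6 : ℕ) : ℝ)+1) with hb
      have hkey : 5 * Real.log n ≤ 4 * (a^2 - b^2) := by
        have h1 : (5/4:ℝ) * (a + b) ≤ (a - b) * (a + b) := by
          apply mul_le_mul_of_nonneg_right (by linarith) (by linarith)
        nlinarith
      push_cast at ih6 ⊢
      nlinarith [ih6, hstep, hS, hcast, hkey, hAc]


lemma psi_split (n : ℕ) :
    psi n = theta n + ∑ d ∈ (Finset.Icc 1 n).filter (fun d => ¬ d.Prime), Λ d := by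
  rw [psi, theta, ← Finset.sum_filter_add_sum_filter_not (Finset.Icc 1 n) Nat.Prime]
  congr 1
  apply Finset.sum_congr rfl
  intro d hd
  simp only [Finset.mem_filter] at hd
  exact vonMangoldt_apply_prime hd.2

lemma theta_le_psi (n : ℕ) : theta n ≤ psi n := by
  rw [psi_split]
  have : 0 ≤ ∑ d ∈ (Finset.Icc 1 n).filter (fun d => ¬ d.Prime), Λ d :=
    Finset.sum_nonneg fun d _ => vonMangoldt_nonneg
  linarith

lemma theta_nonneg (n : ℕ) : 0 ≤ theta n := by
  apply Finset.sum_nonneg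
  intro p hp
  simp only [Finset.mem_filter, Finset.mem_Icc] at hp
  apply Real.log_nonneg
  exact_mod_cast hp.1.1

lemma card_ge_two_max' {s : Finset ℕ} (hne : s.Nonempty) (h2 : ∀ x ∈ s, 2 ≤ x) :
    s.card + 1 ≤ s.max' hne := by
  have hsub : s ⊆ Finset.Icc 2 (s.max' hne) := by
    intro x hx
    simp only [Finset.mem_Icc]
    exact ⟨h2 x hx, Finset.le_max' s x hx⟩
  have := Finset.card_le_card hsub
  rw [Nat.card_Icc] at this
  have h2m : 2 ≤ s.max' hne := h2 _ (s.max'_mem hne)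
  omega

lemma psi_theta_gap (n : ℕ) :
    psi n - theta n ≤ Real.sqrt n * Real.log n := by
  rcases Nat.eq_zero_or_pos n with rfl | hn0
  · simp [psi, theta]
  rw [psi_split]
  have hlogn0 : 0 ≤ Real.log n := Real.log_nonneg (by exact_mod_cast hn0)
  -- the set of prime powers with exponent ≥ 2
  set t := (Finset.Icc 1 n).filter (fun d => ¬ d.Prime) with ht
  set K := Nat.log 2 n with hK
  set r := Nat.sqrt n with hr
  set P := (Finset.Icc 2 r).filter Nat.Prime with hP
  set s' := (P ×ˢ Finset.Icc 2 K).filter (fun q => q.1 ^ q.2 ≤ n) with hs'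
  have hinj : ∀ q ∈ s', ∀ q' ∈ s', q.1 ^ q.2 = q'.1 ^ q'.2 → q = q' := by
    rintro ⟨p, k⟩ hq ⟨p', k'⟩ hq' heq
    simp only [hs', Finset.mem_filter, Finset.mem_product, hP, Finset.mem_Icc] at hq hq'
    obtain ⟨⟨⟨_, hp⟩, hk⟩, _⟩ := hq
    obtain ⟨⟨⟨_, hp'⟩, hk'⟩, _⟩ := hq'
    have hk0 : k ≠ 0 := by omega
    have hpp' : p = p' := by
      have hdvd : p ∣ p' ^ k' := by
        rw [← heq]
        exact dvd_pow_self p hk0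
      have := hp.dvd_of_dvd_pow hdvd
      exact (Nat.prime_dvd_prime_iff_eq hp hp').mp this
    subst hpp'
    have hkk : k = k' := Nat.pow_right_injective hp.two_le heq
    simp [hkk]
  have hsub : t.filter IsPrimePow ⊆ s'.image (fun q => q.1 ^ q.2) := by
    intro d hd
    simp only [ht, Finset.mem_filter, Finset.mem_Icc] at hd
    obtain ⟨⟨⟨hd1, hdn⟩, hdnp⟩, hdpp⟩ := hd
    obtain ⟨p, k, hp, hk, rfl⟩ := (isPrimePow_nat_iff _).mp hdpp
    have hk2 : 2 ≤ k := by
      by_contra hcon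
      have hk1 : k = 1 := by omega
      subst hk1
      rw [pow_one] at hdnp
      exact hdnp hp
    have hp2 : 2 ≤ p := hp.two_le
    have hpr : p ≤ r := by
      rw [hr, Nat.le_sqrt]
      calc p * p = p^2 := by ring
        _ ≤ p^k := Nat.pow_le_pow_right (by omega) hk2
        _ ≤ n := hdn
    have hkK : k ≤ K := by
      rw [hK, Nat.le_log_iff_pow_le (by norm_num) (by omega)]
      calc 2^k ≤ p^k := Nat.pow_le_pow_left hp2 k
        _ ≤ n := hdn
    apply Finset.mem_image.mpr
    refine ⟨(p, k), ?_, rfl⟩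
    simp only [hs', Finset.mem_filter, Finset.mem_product, hP, Finset.mem_Icc]
    exact ⟨⟨⟨⟨hp2, hpr⟩, hp⟩, hk2, hkK⟩, hdn⟩
  -- main chain
  have h1 : (∑ d ∈ t, Λ d) = ∑ d ∈ t.filter IsPrimePow, Λ d := by
    symm
    apply Finset.sum_filter_of_ne
    intro d _ hne
    exact vonMangoldt_ne_zero_iff.mp hne
  have h2 : (∑ d ∈ t.filter IsPrimePow, Λ d) ≤ ∑ d ∈ s'.image (fun q => q.1 ^ q.2), Λ d := by
    apply Finset.sum_le_sum_of_subset_of_nonneg hsub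
    intro d _ _
    exact vonMangoldt_nonneg
  have h3 : (∑ d ∈ s'.image (fun q => q.1 ^ q.2), Λ d) = ∑ q ∈ s', Real.log q.1 := by
    rw [Finset.sum_image hinj]
    apply Finset.sum_congr rfl
    rintro ⟨p, k⟩ hq
    simp only [hs', Finset.mem_filter, Finset.mem_product, hP, Finset.mem_Icc] at hq
    rw [vonMangoldt_apply_pow (by omega : k ≠ 0), vonMangoldt_apply_prime hq.1.1.2]
  -- rewrite the sum over s' as iterated sum
  have h4 : (∑ q ∈ s', Real.log q.1)
      = ∑ p ∈ P, ∑ k ∈ (Finset.Icc 2 K).filter (fun k => p ^ k ≤ n), Real.log p := by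
    rw [hs', Finset.sum_filter, Finset.sum_product]
    apply Finset.sum_congr rfl
    intro p _
    rw [Finset.sum_filter]
  -- bound each inner sum by log n
  have h5 : ∀ p ∈ P, (∑ k ∈ (Finset.Icc 2 K).filter (fun k => p ^ k ≤ n), Real.log p)
      ≤ Real.log n := by
    intro p hpP
    simp only [hP, Finset.mem_filter, Finset.mem_Icc] at hpP
    obtain ⟨⟨hp2, hpr⟩, hp⟩ := hpP
    set u := (Finset.Icc 2 K).filter (fun k => p ^ k ≤ n) with hu
    rw [Finset.sum_const, nsmul_eq_mul]
    rcases Finset.eq_empty_or_nonempty u with he | hne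
    · rw [he]; simp [hlogn0]
    · have hmax := u.max'_mem hne
      simp only [hu, Finset.mem_filter, Finset.mem_Icc] at hmax
      have hcard : u.card + 1 ≤ u.max' hne := by
        apply card_ge_two_max' hne
        intro x hx
        simp only [hu, Finset.mem_filter, Finset.mem_Icc] at hx
        omega
      have hpow : p ^ u.card ≤ n := by
        calc p ^ u.card ≤ p ^ (u.max' hne) := Nat.pow_le_pow_right (by omega) (by omega)
          _ ≤ n := hmax.2
      calc (u.card : ℝ) * Real.log p = Real.log ((p:ℝ) ^ u.card) := by
            rw [Real.log_pow]
        _ ≤ Real.log n := by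
            apply Real.log_le_log (by positivity)
            exact_mod_cast hpow
  have h6 : (∑ p ∈ P, Real.log (n:ℝ)) ≤ Real.sqrt n * Real.log n := by
    rw [Finset.sum_const, nsmul_eq_mul]
    apply mul_le_mul_of_nonneg_right _ hlogn0
    calc (P.card : ℝ) ≤ ((Finset.Icc 2 r).card : ℝ) := by
          exact_mod_cast Finset.card_le_card (Finset.filter_subset _ _)
      _ ≤ (r : ℝ) := by
          rw [Nat.card_Icc]
          have : r + 1 - 2 ≤ r := by omega
          exact_mod_cast this
      _ ≤ Real.sqrt n := Real.nat_sqrt_le_real_sqrt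
  have hth : 0 ≤ theta n := theta_nonneg n
  have hchain : (∑ d ∈ t, Λ d) ≤ Real.sqrt n * Real.log n := by
    calc (∑ d ∈ t, Λ d) = ∑ d ∈ t.filter IsPrimePow, Λ d := h1
      _ ≤ ∑ d ∈ s'.image (fun q => q.1 ^ q.2), Λ d := h2
      _ = ∑ q ∈ s', Real.log q.1 := h3
      _ = ∑ p ∈ P, ∑ k ∈ (Finset.Icc 2 K).filter (fun k => p ^ k ≤ n), Real.log p := h4
      _ ≤ ∑ p ∈ P, Real.log (n:ℝ) := Finset.sum_le_sum h5
      _ ≤ Real.sqrt n * Real.log n := h6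
  linarith


lemma S_lower' {n : ℕ} (hn : 30 ≤ n) : Ac * n - 4 * Real.log n - 1 ≤ psi n := by
  have h1 := S_lower hn
  have h2 := S_le_psi n
  linarith

lemma theta_strict {n : ℕ} (hn : 10000000 ≤ n) :
    theta ((13*n+12)/17) < theta n := by
  set m := (13*n+12)/17 with hm
  have hmn : m ≤ n := by omega
  have hn30 : 30 ≤ n := by omega
  have hnR : (10000000:ℝ) ≤ (n:ℝ) := by exact_mod_cast hn
  have hnpos : (0:ℝ) < n := by linarith
  have hn1 : (1:ℝ) ≤ (n:ℝ) := by linarith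
  -- θ(n) lower bound
  have h1 : Ac * n - 4 * Real.log n - 1 - Real.sqrt n * Real.log n ≤ theta n := by
    have := S_lower' hn30
    have := psi_theta_gap n
    linarith
  -- θ(m) upper bound
  have h2 : theta m ≤ (6 * Ac / 5) * m + 4 * (Real.log (m+1))^2 + 101 := by
    have := theta_le_psi m
    have := psi_upper m
    linarith
  have hmR : (m:ℝ) ≤ (13 * (n:ℝ) + 12)/17 := by
    rw [le_div_iff₀ (by norm_num)]
    have h17 : 17 * m ≤ 13 * n + 12 := by omega
    have h17' : (17:ℝ) * (m:ℝ) ≤ 13 * (n:ℝ) + 12 := by exact_mod_cast h17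
    linarith
  have hm1n : ((m:ℝ)+1)^2 ≤ ((n:ℝ)+1)^2 := by
    have : (m:ℝ) ≤ (n:ℝ) := by exact_mod_cast hmn
    nlinarith
  have hlogm : Real.log ((m:ℝ)+1) ≤ Real.log ((n:ℝ)+1) := by
    apply Real.log_le_log (by positivity)
    have : (m:ℝ) ≤ (n:ℝ) := by exact_mod_cast hmn
    linarith
  have hlogm0 : 0 ≤ Real.log ((m:ℝ)+1) := Real.log_nonneg (by
    have := Nat.cast_nonneg (α := ℝ) m
    linarith)
  have hsq : (Real.log ((m:ℝ)+1))^2 ≤ (Real.log ((n:ℝ)+1))^2 := by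
    nlinarith
  -- bounds via y = n^(1/8)
  set y := (n:ℝ) ^ ((1:ℝ)/8) with hy
  have hy0 : 0 < y := Real.rpow_pos_of_pos hnpos _
  have hy8 : y ^ 8 = (n:ℝ) := by
    rw [hy, ← Real.rpow_natCast ((n:ℝ) ^ ((1:ℝ)/8)) 8, ← Real.rpow_mul (le_of_lt hnpos)]
    norm_num
  have hy4 : y ^ 4 = Real.sqrt n := by
    rw [hy, ← Real.rpow_natCast ((n:ℝ) ^ ((1:ℝ)/8)) 4, ← Real.rpow_mul (le_of_lt hnpos)]
    rw [Real.sqrt_eq_rpow]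
    norm_num
  have hylb : (7.49:ℝ) ≤ y := by
    by_contra hcon
    push_neg at hcon
    have : y ^ 8 < 7.49 ^ 8 := by
      apply pow_lt_pow_left₀ hcon (le_of_lt hy0)
      norm_num
    rw [hy8] at this
    norm_num at this
    linarith
  have hlogy : Real.log y ≤ y := by
    have := Real.log_le_sub_one_of_pos hy0
    linarith
  have hlogn : Real.log n = 8 * Real.log y := by
    rw [hy, Real.log_rpow hnpos]
    ring
  have hlogn1 : Real.log ((n:ℝ)+1) ≤ 0.7 + 8 * y := by
    have hle : (n:ℝ) + 1 ≤ 2 * n := by linarith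
    have h2n : Real.log ((n:ℝ)+1) ≤ Real.log (2 * n) := by
      apply Real.log_le_log (by positivity) hle
    rw [Real.log_mul (by norm_num) hnpos.ne'] at h2n
    have hl2 : Real.log 2 ≤ 0.7 := by
      have := Real.log_two_lt_d9
      linarith
    have hly0 : 0 ≤ Real.log y := by
      apply Real.log_nonneg
      linarith
    nlinarith [hlogn]
  have hlogn0 : 0 ≤ Real.log n := Real.log_nonneg hn1
  clear_value y
  -- the decisive numeric inequality
  have hAl := Ac_lb
  have hAu := Ac_ub
  have hy2 : (56.1:ℝ) ≤ y^2 := by nlinarith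
  have hy3 : (420:ℝ) ≤ y^3 := by nlinarith
  have hy5 : (23500:ℝ) ≤ y^5 := by nlinarith
  have hy5' : (0:ℝ) ≤ y^5 := by positivity
  have hy2' : (0:ℝ) ≤ y^2 := by positivity
  -- θ(m) ≤ ... ≤ stuff < lower bound of θ(n)
  have hfin : (6 * Ac / 5) * ((13 * (n:ℝ) + 12)/17) + 4 * (Real.log ((n:ℝ)+1))^2 + 101
      < Ac * n - 4 * Real.log n - 1 - Real.sqrt n * Real.log n := by
    rw [← hy4, hlogn]
    have hsqrtlog : y^4 * (8 * Real.log y) ≤ 8 * y^5 := by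
      have h4 : (0:ℝ) ≤ y^4 := by positivity
      nlinarith
    have hlogsq : 4 * (Real.log ((n:ℝ)+1))^2 ≤ 4 * (0.7 + 8*y)^2 := by
      have : 0 ≤ Real.log ((n:ℝ)+1) := Real.log_nonneg (by linarith)
      nlinarith
    have hmargin : (7 * Ac / 85) * (n:ℝ) ≥ 0.0749 * y^8 := by
      rw [hy8]
      nlinarith
    have hlogyn : 8 * Real.log y ≤ 8 * y := by linarith
    -- final polynomial inequality
    have hpoly : 0.0749 * y^8 > 8*y^5 + 4*(0.7+8*y)^2 + 32*y + 103 + 0.79 := by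
      nlinarith [mul_le_mul_of_nonneg_left hy3 hy5', mul_le_mul_of_nonneg_left hy2 hy5',
        mul_le_mul_of_nonneg_left hy5 hy2', sq_nonneg y, hy0.le, hylb]
    nlinarith [hpoly, hsqrtlog, hlogsq, hmargin, hlogyn, hy5', hy2', hlogy,
      Real.log_nonneg (show (1:ℝ) ≤ y by linarith)]
  have hthm : theta m < theta n := by
    have hc1 : (6 * Ac / 5) * (m:ℝ) ≤ (6 * Ac / 5) * ((13 * (n:ℝ) + 12)/17) := by
      apply mul_le_mul_of_nonneg_left hmR
      linarith
    nlinarith [h1, h2, hfin, hsq, hc1]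
  exact hthm



lemma exists_prime_large {n : ℕ} (hn : 10000000 ≤ n) :
    ∃ p : ℕ, p.Prime ∧ (13*n+12)/17 < p ∧ p ≤ n := by
  by_contra hcon
  push_neg at hcon
  have hlt := theta_strict hn
  have heq : (Finset.Icc 1 n).filter Nat.Prime
      = (Finset.Icc 1 ((13*n+12)/17)).filter Nat.Prime := by
    ext p
    simp only [Finset.mem_filter, Finset.mem_Icc]
    constructor
    · rintro ⟨⟨h1, h2⟩, hp⟩
      refine ⟨⟨h1, ?_⟩, hp⟩
      by_contra hgt
      push_neg at hgt
      have := hcon p hp hgt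
      omega
    · rintro ⟨⟨h1, h2⟩, hp⟩
      exact ⟨⟨h1, by omega⟩, hp⟩
  rw [theta, theta, heq] at hlt
  exact lt_irrefl _ hlt

def P (n : ℕ) : Prop := ∃ p : ℕ, p.Prime ∧ p ≤ n ∧ 13 * (n + 1) ≤ 17 * p

lemma step (p q : ℕ) (hp : p.Prime) (hq : 13 * q ≤ 17 * p)
    (htail : ∀ n : ℕ, q ≤ n → P n) : ∀ n : ℕ, p ≤ n → P n := by
  intro n hn
  rcases Nat.lt_or_ge n q with h | h
  · exact ⟨p, hp, hn, by omega⟩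
  · exact htail n h

lemma tail : ∀ n : ℕ, 11952233 ≤ n → P n := by
  intro n hn
  obtain ⟨p, hp, h1, h2⟩ := exists_prime_large (by omega : 10000000 ≤ n)
  exact ⟨p, hp, h2, by omega⟩

lemma G : ∀ n : ℕ, 11 ≤ n → P n := by
  have h := tail
  have h := step 9139943 11952233 (by norm_num) (by norm_num) h
  have h := step 6989369 9139943 (by norm_num) (by norm_num) h
  have h := step 5344813 6989369 (by norm_num) (by norm_num) h
  have h := step 4087217 5344813 (by norm_num) (by norm_num) h
  have h := step 3125527 4087217 (by norm_num) (by norm_num) h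
  have h := step 2390111 3125527 (by norm_num) (by norm_num) h
  have h := step 1827733 2390111 (by norm_num) (by norm_num) h
  have h := step 1397681 1827733 (by norm_num) (by norm_num) h
  have h := step 1068817 1397681 (by norm_num) (by norm_num) h
  have h := step 817337 1068817 (by norm_num) (by norm_num) h
  have h := step 625033 817337 (by norm_num) (by norm_num) h
  have h := step 477977 625033 (by norm_num) (by norm_num) h
  have h := step 365513 477977 (by norm_num) (by norm_num) h
  have h := step 279511 365513 (by norm_num) (by norm_num) h
  have h := step 213751 279511 (by norm_num) (by norm_num) h
  have h := step 163487 213751 (by norm_num) (by norm_num) h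
  have h := step 125029 163487 (by norm_num) (by norm_num) h
  have h := step 95621 125029 (by norm_num) (by norm_num) h
  have h := step 73127 95621 (by norm_num) (by norm_num) h
  have h := step 55921 73127 (by norm_num) (by norm_num) h
  have h := step 42767 55921 (by norm_num) (by norm_num) h
  have h := step 32707 42767 (by norm_num) (by norm_num) h
  have h := step 25013 32707 (by norm_num) (by norm_num) h
  have h := step 19141 25013 (by norm_num) (by norm_num) h
  have h := step 14639 19141 (by norm_num) (by norm_num) h
  have h := step 11197 14639 (by norm_num) (by norm_num) h
  have h := step 8563 11197 (by norm_num) (by norm_num) h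
  have h := step 6551 8563 (by norm_num) (by norm_num) h
  have h := step 5011 6551 (by norm_num) (by norm_num) h
  have h := step 3833 5011 (by norm_num) (by norm_num) h
  have h := step 2939 3833 (by norm_num) (by norm_num) h
  have h := step 2251 2939 (by norm_num) (by norm_num) h
  have h := step 1723 2251 (by norm_num) (by norm_num) h
  have h := step 1319 1723 (by norm_num) (by norm_num) h
  have h := step 1009 1319 (by norm_num) (by norm_num) h
  have h := step 773 1009 (by norm_num) (by norm_num) h
  have h := step 601 773 (by norm_num) (by norm_num) h
  have h := step 461 601 (by norm_num) (by norm_num) h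
  have h := step 353 461 (by norm_num) (by norm_num) h
  have h := step 271 353 (by norm_num) (by norm_num) h
  have h := step 211 271 (by norm_num) (by norm_num) h
  have h := step 167 211 (by norm_num) (by norm_num) h
  have h := step 131 167 (by norm_num) (by norm_num) h
  have h := step 103 131 (by norm_num) (by norm_num) h
  have h := step 79 103 (by norm_num) (by norm_num) h
  have h := step 61 79 (by norm_num) (by norm_num) h
  have h := step 47 61 (by norm_num) (by norm_num) h
  have h := step 37 47 (by norm_num) (by norm_num) h
  have h := step 29 37 (by norm_num) (by norm_num) h
  have h := step 23 29 (by norm_num) (by norm_num) h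
  have h := step 19 23 (by norm_num) (by norm_num) h
  have h := step 17 19 (by norm_num) (by norm_num) h
  have h := step 13 17 (by norm_num) (by norm_num) h
  have h := step 11 13 (by norm_num) (by norm_num) h
  exact h


lemma pi_lt {a b p : ℕ} (hp : p.Prime) (hap : a < p) (hpb : p ≤ b) :
    Nat.primeCounting a < Nat.primeCounting b := by
  rw [Nat.primeCounting, Nat.primeCounting, Nat.primeCounting']
  calc Nat.count Nat.Prime (a + 1) ≤ Nat.count Nat.Prime p := Nat.count_monotone _ (by omega)
    _ < Nat.count Nat.Prime (p + 1) := Nat.count_lt_count_succ_iff.mpr hp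
    _ ≤ Nat.count Nat.Prime (b + 1) := Nat.count_monotone _ (by omega)

lemma pi_mono {a b : ℕ} (h : a ≤ b) : Nat.primeCounting a ≤ Nat.primeCounting b :=
  Nat.monotone_primeCounting h

lemma pi_10 : Nat.primeCounting 10 = 4 := by decide
lemma pi_7 : Nat.primeCounting 7 = 4 := by decide

/-- membership of 11 -/
lemma mem11 {k : ℝ} (hk1 : (17/13 : ℝ) ≤ k) {x : ℝ} (hx : (11:ℝ) ≤ x) :
    primePi (x / k) < primePi x := by
  have hk0 : (0:ℝ) < k := by linarith [show (0:ℝ) < 17/13 by norm_num]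
  have hx0 : (0:ℝ) ≤ x := by linarith
  set n := ⌊x⌋₊ with hn
  have hn11 : 11 ≤ n := Nat.le_floor (by exact_mod_cast hx)
  obtain ⟨p, hp, hpn, hpb⟩ := G n hn11
  have hxn1 : x < (n:ℝ) + 1 := Nat.lt_floor_add_one x
  have hkey : x / k < p := by
    have h13 : 13 * x < 13 * ((n:ℝ) + 1) := by linarith
    have h17 : 13 * ((n:ℝ) + 1) ≤ 17 * (p:ℝ) := by exact_mod_cast hpb
    rw [div_lt_iff₀ hk0]
    have hpk : (p:ℝ) * (17/13) ≤ (p:ℝ) * k :=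
      mul_le_mul_of_nonneg_left hk1 (Nat.cast_nonneg p)
    nlinarith
  have hfl : ⌊x / k⌋₊ < p := by
    rw [Nat.floor_lt (by positivity)]
    exact hkey
  exact pi_lt hp hfl hpn

/-- failure below 11 -/
lemma fail_le10 {k : ℝ} (hk1 : (17/13 : ℝ) ≤ k) (hk2 : k < (11/7 : ℝ)) :
    ∃ x : ℝ, (10:ℝ) ≤ x ∧ ¬ (primePi (x / k) < primePi x) := by
  have hk0 : (0:ℝ) < k := by linarith [show (0:ℝ) < 17/13 by norm_num]
  refine ⟨max 10 (7*k), le_max_left _ _, ?_⟩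
  set x := max 10 (7*k) with hx
  have hx10 : (10:ℝ) ≤ x := le_max_left _ _
  have hx11 : x < 11 := by
    apply max_lt (by norm_num)
    linarith
  have hfx : ⌊x⌋₊ = 10 := by
    rw [Nat.floor_eq_iff (by linarith)]
    constructor <;> [skip; skip] <;> push_cast <;> linarith
  have hxk7 : (7:ℝ) ≤ x / k := by
    rw [le_div_iff₀ hk0]
    calc 7 * k = 7 * k := rfl
      _ ≤ x := le_max_right _ _
  have hfxk : 7 ≤ ⌊x / k⌋₊ := Nat.le_floor (by exact_mod_cast hxk7)
  intro hcon
  rw [primePi, primePi, hfx, pi_10] at hcon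
  have : 4 ≤ Nat.primeCounting ⌊x / k⌋₊ := by
    calc 4 = Nat.primeCounting 7 := pi_7.symm
      _ ≤ _ := pi_mono hfxk
  omega


end Nag

theorem first_k_ramanujan_stmt12 (k : ℝ) (hk1 : (17 / 13 : ℝ) ≤ k) (hk2 : k < (11 / 7 : ℝ)) :
    firstRamanujanPrime k = 11 := by
  rw [firstRamanujanPrime]
  set S := {m : ℕ | 0 < m ∧ ∀ x : ℝ, (m : ℝ) ≤ x → primePi (x / k) < primePi x} with hS
  have h11 : 11 ∈ S := by
    refine ⟨by norm_num, fun x hx => ?_⟩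
    exact Nag.mem11 hk1 (by exact_mod_cast hx)
  apply le_antisymm
  · exact Nat.sInf_le h11
  · apply le_csInf ⟨11, h11⟩
    intro m hm
    by_contra hcon
    push_neg at hcon
    obtain ⟨hm0, hmall⟩ := hm
    obtain ⟨x, hx10, hxfail⟩ := Nag.fail_le10 hk1 hk2
    apply hxfail
    apply hmall
    have : (m:ℝ) ≤ 10 := by exact_mod_cast (by omega : m ≤ 10)
    linarith
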